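/- Let $T>0$ and $q \in L^4([0,T];\mathbb R)$ with $q_u \ne 0$ for a.e. $u$. Consider $J_2(\Gamma) := \int_0^T (|\Gamma_u|^2 - q_u \int_0^u q_s \Gamma_s ds) du$ on $L^2([0,T];\mathbb R)$. Then the unique minimizer $\Gamma^*$ of $J_2$ satisfies, for some constant $c_2 \in \mathbb R$, $\Gamma^*_u = -\frac{1}{2} q_u (\int_0^u q_s ds + c_2)$ for almost every $u \in [0,T]$. -/

import Mathlib

open MeasureTheory Filter Set Topology

/-- The functional `J₂(Γ) = ∫₀ᵀ (|Γ_u|² - q_u ∫₀ᵘ q_s Γ_s ds) du`. -/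
noncomputable def J2 (T : ℝ) (q Γ : ℝ → ℝ) : ℝ :=
  ∫ u in Icc (0:ℝ) T, (Γ u ^ 2 - q u * ∫ s in Ioc (0:ℝ) u, q s * Γ s)

section Aux

variable {T : ℝ} {q : ℝ → ℝ}

/-- Primitive of `q`. -/
noncomputable def primQ (q : ℝ → ℝ) (u : ℝ) : ℝ := ∫ s in Ioc (0:ℝ) u, q s

/-- The function `g u = q u * ∫_u^T q` (expressed via the primitive). -/
noncomputable def gQ (T : ℝ) (q : ℝ → ℝ) (u : ℝ) : ℝ := q u * (primQ q T - primQ q u)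

lemma mul_mem_L1 {μ : Measure ℝ} {f g : ℝ → ℝ} (hf : MemLp f 2 μ) (hg : MemLp g 2 μ) :
    Integrable (fun u => f u * g u) μ := by
  rw [← memLp_one_iff_integrable]
  simpa [smul_eq_mul, Pi.mul_def] using hg.smul hf (r := 1)
    (hpqr := ⟨by simp [one_div, ENNReal.inv_two_add_inv_two]⟩)

lemma hq2 (hq : MemLp q 4 (volume.restrict (Icc (0:ℝ) T))) :
    MemLp q 2 (volume.restrict (Icc (0:ℝ) T)) :=
  hq.mono_exponent (by norm_num)

lemma hqI (hq : MemLp q 4 (volume.restrict (Icc (0:ℝ) T))) :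
    IntegrableOn q (Icc (0:ℝ) T) volume :=
  (hq2 hq).integrable (by norm_num)

lemma abs_int_Ioc_le {f : ℝ → ℝ} (hf : IntegrableOn f (Icc (0:ℝ) T) volume)
    {a b : ℝ} (ha : 0 ≤ a) (hb : b ≤ T) :
    |∫ s in Ioc a b, f s| ≤ ∫ s in Ioc (0:ℝ) T, |f s| := by
  calc |∫ s in Ioc a b, f s| ≤ ∫ s in Ioc a b, |f s| := by
        simpa using norm_integral_le_integral_norm (μ := volume.restrict (Ioc a b)) f
    _ ≤ ∫ s in Ioc (0:ℝ) T, |f s| := by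
        refine setIntegral_mono_set (IntegrableOn.mono_set hf.norm Ioc_subset_Icc_self)
          (Eventually.of_forall fun s => abs_nonneg _) (HasSubset.Subset.eventuallyLE ?_)
        exact Ioc_subset_Ioc ha hb

lemma primQ_cont (hq : MemLp q 4 (volume.restrict (Icc (0:ℝ) T))) :
    ContinuousOn (primQ q) (Icc (0:ℝ) T) :=
  intervalIntegral.continuousOn_primitive (hqI hq)

lemma gQ_mem (hq : MemLp q 4 (volume.restrict (Icc (0:ℝ) T))) :
    MemLp (gQ T q) 2 (volume.restrict (Icc (0:ℝ) T)) := by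
  set M : ℝ := ∫ s in Ioc (0:ℝ) T, |q s| with hM
  have hMnn : 0 ≤ M := setIntegral_nonneg measurableSet_Ioc fun s _ => abs_nonneg _
  have hmeas : AEStronglyMeasurable (gQ T q) (volume.restrict (Icc (0:ℝ) T)) := by
    exact (hq2 hq).1.mul
      (((continuousOn_const.sub (primQ_cont hq)).aestronglyMeasurable measurableSet_Icc))
  refine MemLp.of_le_mul (c := 2 * M) (hq2 hq) hmeas ?_
  filter_upwards [ae_restrict_mem measurableSet_Icc] with u hu
  have h1 : |primQ q T| ≤ M := by
    simpa [primQ] using abs_int_Ioc_le (hqI hq) le_rfl le_rfl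
  have h2 : |primQ q u| ≤ M := by
    simpa [primQ] using abs_int_Ioc_le (hqI hq) le_rfl hu.2
  have hb : |primQ q T - primQ q u| ≤ 2 * M := by
    calc |primQ q T - primQ q u| ≤ |primQ q T| + |primQ q u| := by
          have := abs_add_le (primQ q T) (-(primQ q u)); simpa [sub_eq_add_neg] using this
      _ ≤ 2 * M := by linarith
  show ‖gQ T q u‖ ≤ 2 * M * ‖q u‖
  rw [gQ, Real.norm_eq_abs, Real.norm_eq_abs, abs_mul, mul_comm (2 * M) _]
  exact mul_le_mul_of_nonneg_left hb (abs_nonneg _)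

lemma primQ_split (hq : MemLp q 4 (volume.restrict (Icc (0:ℝ) T)))
    {s : ℝ} (h0 : 0 ≤ s) (hsT : s ≤ T) :
    primQ q s + ∫ x in Ioc s T, q x = primQ q T := by
  rw [primQ, primQ, ← setIntegral_union (Ioc_disjoint_Ioc_of_le le_rfl) measurableSet_Ioc
    ((hqI hq).mono_set (Ioc_subset_Icc_self.trans (Icc_subset_Icc le_rfl hsT)))
    ((hqI hq).mono_set (Ioc_subset_Icc_self.trans (Icc_subset_Icc h0 le_rfl))),
    Ioc_union_Ioc_eq_Ioc h0 hsT]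

lemma fubini_key (hq : MemLp q 4 (volume.restrict (Icc (0:ℝ) T)))
    {Γ : ℝ → ℝ} (hΓ : MemLp Γ 2 (volume.restrict (Icc (0:ℝ) T))) :
    ∫ u in Icc (0:ℝ) T, q u * ∫ s in Ioc (0:ℝ) u, q s * Γ s
      = ∫ u in Icc (0:ℝ) T, gQ T q u * Γ u := by
  set μ := volume.restrict (Icc (0:ℝ) T) with hμ
  set f : ℝ → ℝ := fun s => q s * Γ s with hf
  have hfI : Integrable f μ := mul_mem_L1 (hq2 hq) hΓ
  have hqIμ : Integrable q μ := hqI hq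
  have hprod : Integrable (fun p : ℝ × ℝ => q p.1 * f p.2) (μ.prod μ) :=
    hqIμ.mul_prod hfI
  have hS : MeasurableSet {p : ℝ × ℝ | 0 < p.2 ∧ p.2 ≤ p.1} :=
    (measurableSet_lt measurable_const measurable_snd).inter
      (measurableSet_le measurable_snd measurable_fst)
  have hind : ∀ p : ℝ × ℝ, ({p : ℝ × ℝ | 0 < p.2 ∧ p.2 ≤ p.1}).indicator
      (fun p : ℝ × ℝ => q p.1 * f p.2) p = q p.1 * (Ioc (0:ℝ) p.1).indicator f p.2 := by
    intro p
    simp only [Set.indicator_apply, Set.mem_setOf_eq, Set.mem_Ioc]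
    split_ifs <;> simp
  have hFi : Integrable (fun p : ℝ × ℝ => q p.1 * (Ioc (0:ℝ) p.1).indicator f p.2)
      (μ.prod μ) :=
    (hprod.indicator hS).congr (Eventually.of_forall fun p => hind p)
  have hL : ∫ u, (q u * ∫ s in Ioc (0:ℝ) u, f s) ∂μ
      = ∫ u, (∫ s, q u * (Ioc (0:ℝ) u).indicator f s ∂μ) ∂μ := by
    refine integral_congr_ae ?_
    filter_upwards [ae_restrict_mem measurableSet_Icc] with u hu
    rw [integral_const_mul]
    congr 1
    rw [integral_indicator measurableSet_Ioc, hμ, Measure.restrict_restrict measurableSet_Ioc,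
      inter_eq_left.mpr (Ioc_subset_Icc_self.trans (Icc_subset_Icc le_rfl hu.2))]
  have hswap : ∫ u, (∫ s, q u * (Ioc (0:ℝ) u).indicator f s ∂μ) ∂μ
      = ∫ s, (∫ u, q u * (Ioc (0:ℝ) u).indicator f s ∂μ) ∂μ :=
    integral_integral_swap hFi
  have hae0 : ∀ᵐ s ∂μ, s ≠ 0 := by
    refine ae_iff.mpr ?_
    have h0 : {s : ℝ | ¬ s ≠ 0} = {(0:ℝ)} := by ext x; simp
    rw [h0, hμ, Measure.restrict_apply (measurableSet_singleton 0)]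
    exact measure_mono_null inter_subset_left (by simp)
  have hR : ∫ s, (∫ u, q u * (Ioc (0:ℝ) u).indicator f s ∂μ) ∂μ
      = ∫ s, gQ T q s * Γ s ∂μ := by
    refine integral_congr_ae ?_
    filter_upwards [ae_restrict_mem measurableSet_Icc, hae0] with s hs hs0
    have hspos : 0 < s := lt_of_le_of_ne hs.1 (Ne.symm hs0)
    have h1 : (fun u => q u * (Ioc (0:ℝ) u).indicator f s)
        = fun u => (Ici s).indicator (fun u => q u * f s) u := by
      funext u
      simp only [Set.indicator_apply, Set.mem_Ioc, Set.mem_Ici]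
      by_cases h : s ≤ u
      · simp [h, hspos]
      · simp [h]
    rw [h1, integral_indicator measurableSet_Ici, hμ,
      Measure.restrict_restrict measurableSet_Ici]
    have hset : Ici s ∩ Icc (0:ℝ) T = Icc s T := by
      ext x
      simp only [mem_inter_iff, mem_Ici, mem_Icc]
      constructor
      · rintro ⟨hx1, _, hx3⟩; exact ⟨hx1, hx3⟩
      · rintro ⟨hx1, hx2⟩; exact ⟨hx1, hspos.le.trans hx1, hx2⟩
    rw [hset, integral_mul_const, integral_Icc_eq_integral_Ioc]
    have hps := primQ_split hq hspos.le hs.2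
    have h2 : ∫ u in Ioc s T, q u = primQ q T - primQ q s := by linarith
    rw [h2, gQ, hf]
    ring
  exact hL.trans (hswap.trans hR)

lemma second_term_integrable (hq : MemLp q 4 (volume.restrict (Icc (0:ℝ) T)))
    {Γ : ℝ → ℝ} (hΓ : MemLp Γ 2 (volume.restrict (Icc (0:ℝ) T))) :
    Integrable (fun u => q u * ∫ s in Ioc (0:ℝ) u, q s * Γ s)
      (volume.restrict (Icc (0:ℝ) T)) := by
  set f : ℝ → ℝ := fun s => q s * Γ s with hf
  have hfI : IntegrableOn f (Icc (0:ℝ) T) volume := mul_mem_L1 (hq2 hq) hΓ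
  set N : ℝ := ∫ s in Ioc (0:ℝ) T, |f s| with hN
  have hmeas : AEStronglyMeasurable (fun u => q u * ∫ s in Ioc (0:ℝ) u, f s)
      (volume.restrict (Icc (0:ℝ) T)) :=
    (hq2 hq).1.mul ((intervalIntegral.continuousOn_primitive hfI).aestronglyMeasurable
      measurableSet_Icc)
  refine Integrable.mono' ((hqI hq).norm.const_mul N) hmeas ?_
  filter_upwards [ae_restrict_mem measurableSet_Icc] with u hu
  have h1 : |∫ s in Ioc (0:ℝ) u, f s| ≤ N := abs_int_Ioc_le hfI le_rfl hu.2
  calc ‖q u * ∫ s in Ioc (0:ℝ) u, f s‖ = |q u| * |∫ s in Ioc (0:ℝ) u, f s| := by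
        rw [Real.norm_eq_abs, abs_mul]
    _ ≤ |q u| * N := mul_le_mul_of_nonneg_left h1 (abs_nonneg _)
    _ = N * ‖q u‖ := by rw [Real.norm_eq_abs]; ring

lemma J2_eq (hq : MemLp q 4 (volume.restrict (Icc (0:ℝ) T)))
    {Γ : ℝ → ℝ} (hΓ : MemLp Γ 2 (volume.restrict (Icc (0:ℝ) T))) :
    J2 T q Γ = (∫ u in Icc (0:ℝ) T, (Γ u - gQ T q u / 2)^2)
      - ∫ u in Icc (0:ℝ) T, (gQ T q u / 2)^2 := by
  have hΓ2 : Integrable (fun u => Γ u ^ 2) (volume.restrict (Icc (0:ℝ) T)) := by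
    simpa [pow_two] using mul_mem_L1 hΓ hΓ
  have hgΓ : Integrable (fun u => gQ T q u * Γ u) (volume.restrict (Icc (0:ℝ) T)) :=
    mul_mem_L1 (gQ_mem hq) hΓ
  have hg2 : Integrable (fun u => (gQ T q u / 2)^2) (volume.restrict (Icc (0:ℝ) T)) := by
    have h := (mul_mem_L1 (gQ_mem hq) (gQ_mem hq)).const_mul (4⁻¹ : ℝ)
    exact h.congr (Eventually.of_forall fun u => by ring)
  have h2nd := second_term_integrable hq hΓ
  rw [J2, integral_sub hΓ2 h2nd, fubini_key hq hΓ]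
  have hexp : ∫ u in Icc (0:ℝ) T, (Γ u - gQ T q u / 2)^2
      = (∫ u in Icc (0:ℝ) T, (Γ u ^ 2 - gQ T q u * Γ u))
        + ∫ u in Icc (0:ℝ) T, (gQ T q u / 2)^2 := by
    rw [integral_congr_ae (Eventually.of_forall (fun u => (by ring :
      (Γ u - gQ T q u / 2)^2 = (Γ u ^ 2 - gQ T q u * Γ u) + (gQ T q u / 2)^2)))]
    exact integral_add (hΓ2.sub hgΓ) hg2
  rw [hexp, integral_sub hΓ2 hgΓ]
  ring

lemma minimizer_ae (hq : MemLp q 4 (volume.restrict (Icc (0:ℝ) T)))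
    {Γ' : ℝ → ℝ} (hΓ' : MemLp Γ' 2 (volume.restrict (Icc (0:ℝ) T)))
    (hmin : ∀ Γ : ℝ → ℝ, MemLp Γ 2 (volume.restrict (Icc (0:ℝ) T)) →
      J2 T q Γ' ≤ J2 T q Γ) :
    Γ' =ᵐ[volume.restrict (Icc (0:ℝ) T)] fun u => gQ T q u / 2 := by
  have hgm : MemLp (fun u => gQ T q u / 2) 2 (volume.restrict (Icc (0:ℝ) T)) := by
    simpa [div_eq_inv_mul] using (gQ_mem hq).const_mul (2⁻¹ : ℝ)
  have hle := hmin _ hgm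
  rw [J2_eq hq hΓ', J2_eq hq hgm] at hle
  have hzero : ∫ u in Icc (0:ℝ) T, (gQ T q u / 2 - gQ T q u / 2)^2 = 0 := by simp
  have h1 : ∫ u in Icc (0:ℝ) T, (Γ' u - gQ T q u / 2)^2 ≤ 0 := by linarith
  have h2 : (0:ℝ) ≤ ∫ u in Icc (0:ℝ) T, (Γ' u - gQ T q u / 2)^2 :=
    integral_nonneg fun u => sq_nonneg _
  have heq0 : ∫ u in Icc (0:ℝ) T, (Γ' u - gQ T q u / 2)^2 = 0 := le_antisymm h1 h2
  have hint : Integrable (fun u => (Γ' u - gQ T q u / 2)^2)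
      (volume.restrict (Icc (0:ℝ) T)) := by
    have hm : MemLp (fun u => Γ' u - gQ T q u / 2) 2 (volume.restrict (Icc (0:ℝ) T)) :=
      hΓ'.sub hgm
    simpa [pow_two] using mul_mem_L1 hm hm
  have hae := (integral_eq_zero_iff_of_nonneg (fun u => sq_nonneg _) hint).mp heq0
  filter_upwards [hae] with u hu
  have h0 : (Γ' u - gQ T q u / 2)^2 = 0 := hu
  have h0' : Γ' u - gQ T q u / 2 = 0 := by
    exact pow_eq_zero_iff (two_ne_zero) |>.mp h0
  exact sub_eq_zero.mp h0'

end Aux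

/-- For `q ∈ L⁴([0,T])` with `q ≠ 0` a.e., any minimizer `Γ*` of
`J₂(Γ) = ∫₀ᵀ (|Γ_u|² - q_u ∫₀ᵘ q_s Γ_s ds) du` over `L²([0,T])` satisfies
`Γ*_u = -½ q_u (∫₀ᵘ q_s ds + c₂)` a.e. for some constant `c₂`, and the minimizer
is a.e. unique. -/
theorem J2_minimizer_characterization
    (T : ℝ) (hT : 0 < T) (q : ℝ → ℝ)
    (hq : MemLp q 4 (volume.restrict (Icc (0:ℝ) T)))
    (hqne : ∀ᵐ u ∂(volume.restrict (Icc (0:ℝ) T)), q u ≠ 0)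
    (Γstar : ℝ → ℝ) (hΓstar : MemLp Γstar 2 (volume.restrict (Icc (0:ℝ) T)))
    (hmin : ∀ Γ : ℝ → ℝ, MemLp Γ 2 (volume.restrict (Icc (0:ℝ) T)) →
      J2 T q Γstar ≤ J2 T q Γ) :
    (∃ c₂ : ℝ, Γstar =ᵐ[volume.restrict (Icc (0:ℝ) T)]
        fun u => -(1/2) * q u * ((∫ s in Ioc (0:ℝ) u, q s) + c₂)) ∧
    (∀ Γ' : ℝ → ℝ, MemLp Γ' 2 (volume.restrict (Icc (0:ℝ) T)) →
      (∀ Γ : ℝ → ℝ, MemLp Γ 2 (volume.restrict (Icc (0:ℝ) T)) → J2 T q Γ' ≤ J2 T q Γ) →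
      Γ' =ᵐ[volume.restrict (Icc (0:ℝ) T)] Γstar) := by
  have key := minimizer_ae hq hΓstar hmin
  constructor
  · refine ⟨-(primQ q T), ?_⟩
    refine key.trans (Eventually.of_forall fun u => ?_)
    show gQ T q u / 2 = -(1/2) * q u * ((∫ s in Ioc (0:ℝ) u, q s) + -(primQ q T))
    simp only [gQ, primQ]
    ring
  · intro Γ' hΓ' hmin'
    exact (minimizer_ae hq hΓ' hmin').trans key.symm
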